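/- Let (X_n)_{n∈ℤ} satisfy the assumptions of Sect. 2 for discrete time, and split X_n = X_n^past + X_n^future with X_n^past = Σ_{j≤0} a_{j−n} ξ_j and X_n^future = Σ_{j>0} a_{j−n} ξ_j. Then there exists ε > 0 such that, almost surely, sup_{n≥0} (n+1)^{1+ε} |X_{−n}^future| < ∞ and sup_{n>0} n^{1+ε} |X_n^past| < ∞. -/

import Mathlib

open MeasureTheory ProbabilityTheory Filter Topology

open scoped ENNReal NNReal

attribute [local instance] Matrix.frobeniusNormedAddCommGroup Matrix.frobeniusNormedSpace

/-- The standard Gaussian measure `γ^d` on `ℝ^d`. -/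
noncomputable def stdGaussian (d : ℕ) : Measure (EuclideanSpace ℝ (Fin d)) :=
  (Measure.pi fun _ : Fin d => gaussianReal 0 1).map
    (MeasurableEquiv.toLp 2 (Fin d → ℝ))

section Aux

open Real
open scoped ENNReal NNReal

/-! ### Gaussian moment generating function computations -/

lemma PFD.gauss_pdf_mul (θ x : ℝ) :
    gaussianPDFReal 0 1 x * rexp (θ * x) = rexp (θ^2/2) * gaussianPDFReal θ 1 x := by
  simp only [gaussianPDFReal, NNReal.coe_one, mul_one, sub_zero]
  rw [mul_comm (rexp (θ^2/2)), mul_assoc, mul_assoc, ← Real.exp_add, ← Real.exp_add]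
  congr 1
  ring

lemma PFD.integrable_exp_gauss (θ : ℝ) :
    Integrable (fun x => rexp (θ * x)) (gaussianReal 0 1) := by
  rw [gaussianReal_of_var_ne_zero 0 one_ne_zero, gaussianPDF_def]
  simp_rw [ENNReal.ofReal]
  rw [integrable_withDensity_iff_integrable_smul
    (measurable_gaussianPDFReal 0 1).real_toNNReal]
  have : (fun x => (gaussianPDFReal 0 1 x).toNNReal • rexp (θ * x))
      = fun x => rexp (θ^2/2) * gaussianPDFReal θ 1 x := by
    ext x
    rw [NNReal.smul_def, smul_eq_mul, Real.coe_toNNReal _ (gaussianPDFReal_nonneg 0 1 x),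
      PFD.gauss_pdf_mul]
  rw [this]
  exact (integrable_gaussianPDFReal θ 1).const_mul _

lemma PFD.integral_exp_gauss (θ : ℝ) :
    ∫ x, rexp (θ * x) ∂(gaussianReal 0 1) = rexp (θ^2/2) := by
  rw [gaussianReal_of_var_ne_zero 0 one_ne_zero, gaussianPDF_def]
  simp_rw [ENNReal.ofReal]
  rw [integral_withDensity_eq_integral_smul (measurable_gaussianPDFReal 0 1).real_toNNReal]
  have : (fun x => (gaussianPDFReal 0 1 x).toNNReal • rexp (θ * x))
      = fun x => rexp (θ^2/2) * gaussianPDFReal θ 1 x := by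
    ext x
    rw [NNReal.smul_def, smul_eq_mul, Real.coe_toNNReal _ (gaussianPDFReal_nonneg 0 1 x),
      PFD.gauss_pdf_mul]
  rw [this, integral_const_mul, integral_gaussianPDFReal_eq_one θ one_ne_zero, mul_one]

lemma PFD.pi_integral_prod {ι : Type*} [Fintype ι] (μ : Measure ℝ) [SigmaFinite μ]
    (f : ι → ℝ → ℝ) :
    ∫ x : ι → ℝ, ∏ i, f i (x i) ∂(Measure.pi fun _ => μ) = ∏ i, ∫ y, f i y ∂μ := by
  letI : MeasureSpace ℝ := ⟨μ⟩
  exact integral_fintype_prod_eq_prod f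

lemma PFD.pi_integrable_prod {ι : Type*} [Fintype ι] (μ : Measure ℝ) [SigmaFinite μ]
    (f : ι → ℝ → ℝ) (hf : ∀ i, Integrable (f i) μ) :
    Integrable (fun x : ι → ℝ => ∏ i, f i (x i)) (Measure.pi fun _ => μ) := by
  letI : MeasureSpace ℝ := ⟨μ⟩
  exact Integrable.fintype_prod hf

lemma PFD.measurable_lin (d : ℕ) (r : Fin d → ℝ) :
    Measurable (fun x : EuclideanSpace ℝ (Fin d) => ∑ k, r k * x k) := by
  measurability

lemma PFD.integral_exp_lin_stdGaussian (d : ℕ) (r : Fin d → ℝ) :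
    ∫ x, rexp (∑ k, r k * x k) ∂(stdGaussian d) = rexp ((∑ k, (r k)^2)/2) := by
  rw [_root_.stdGaussian, integral_map_equiv]
  have h1 : (fun x : Fin d → ℝ =>
      rexp (∑ k, r k * ((MeasurableEquiv.toLp 2 (Fin d → ℝ)) x) k))
      = fun x : Fin d → ℝ => ∏ k, rexp (r k * x k) := by
    ext x; rw [Real.exp_sum]; rfl
  rw [h1, PFD.pi_integral_prod (gaussianReal 0 1) (fun k y => rexp (r k * y))]
  have : ∀ k, ∫ y, rexp (r k * y) ∂(gaussianReal 0 1) = rexp ((r k)^2/2) :=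
    fun k => PFD.integral_exp_gauss (r k)
  rw [Finset.prod_congr rfl (fun k _ => this k), ← Real.exp_sum, ← Finset.sum_div]

lemma PFD.integrable_exp_lin_stdGaussian (d : ℕ) (r : Fin d → ℝ) :
    Integrable (fun x : EuclideanSpace ℝ (Fin d) => rexp (∑ k, r k * x k)) (stdGaussian d) := by
  rw [_root_.stdGaussian, integrable_map_equiv]
  have h1 : ((fun x : EuclideanSpace ℝ (Fin d) => rexp (∑ k, r k * x k)) ∘
      (MeasurableEquiv.toLp 2 (Fin d → ℝ)))
      = fun x : Fin d → ℝ => ∏ k, rexp (r k * x k) := by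
    ext x; simp only [Function.comp_apply]; rw [Real.exp_sum]; rfl
  rw [h1]
  exact PFD.pi_integrable_prod (gaussianReal 0 1) (fun k y => rexp (r k * y))
    (fun k => PFD.integrable_exp_gauss (r k))

/-! ### Matrix and norm helpers -/

lemma PFD.toEuclideanLin_apply_comp (d : ℕ) (M : Matrix (Fin d) (Fin d) ℝ)
    (x : EuclideanSpace ℝ (Fin d)) (i : Fin d) :
    Matrix.toEuclideanLin M x i = ∑ k, M i k * x k := by
  simp [Matrix.toEuclideanLin, Matrix.mulVec, dotProduct]

lemma PFD.norm_le_sum_abs (d : ℕ) (v : EuclideanSpace ℝ (Fin d)) :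
    ‖v‖ ≤ ∑ i, |v i| := by
  rw [EuclideanSpace.norm_eq]
  have h1 : ∑ i, ‖v i‖ ^ 2 ≤ (∑ i, |v i|) ^ 2 := by
    simp_rw [Real.norm_eq_abs]
    exact Finset.sum_sq_le_sq_sum_of_nonneg (fun i _ => abs_nonneg _)
  calc √(∑ i, ‖v i‖ ^ 2) ≤ √((∑ i, |v i|) ^ 2) := Real.sqrt_le_sqrt h1
    _ = ∑ i, |v i| := Real.sqrt_sq (Finset.sum_nonneg fun i _ => abs_nonneg _)

lemma PFD.row_sq_le_frobenius (d : ℕ) (M : Matrix (Fin d) (Fin d) ℝ) (i : Fin d) :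
    ∑ k, (M i k)^2 ≤ ‖M‖^2 := by
  rw [Matrix.frobenius_norm_def, ← Real.rpow_natCast _ 2, ← Real.rpow_mul (by positivity)]
  norm_num
  exact Finset.single_le_sum (f := fun j => ∑ k, (M j k)^2)
    (fun j _ => Finset.sum_nonneg fun k _ => sq_nonneg _) (Finset.mem_univ i)

/-! ### Analytic estimates -/

lemma PFD.summable_shift_rpow {q : ℝ} (hq : q < -1) :
    Summable (fun m : ℕ => ((m:ℝ)+1) ^ q) := by
  have h := Real.summable_nat_rpow (p := q).mpr hq
  have h2 := (summable_nat_add_iff 1).mpr h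
  refine h2.congr fun m => ?_
  push_cast
  rfl

lemma PFD.summable_exp_neg_rpow {α c2 : ℝ} (hα : 0 < α) (hc2 : 0 < c2) :
    Summable (fun n : ℕ => rexp (-(((n:ℝ)+1)^α / c2))) := by
  have hlog := isLittleO_log_rpow_atTop hα
  have hbound := hlog.bound (c := 1/(2*c2)) (by positivity)
  have htend : Tendsto (fun n : ℕ => (n:ℝ)+1) atTop atTop :=
    tendsto_atTop_add_const_right atTop 1 tendsto_natCast_atTop_atTop
  have hev : ∀ᶠ n : ℕ in atTop, rexp (-(((n:ℝ)+1)^α / c2)) ≤ ((n:ℝ)+1) ^ (-2 : ℝ) := by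
    filter_upwards [htend.eventually hbound, htend.eventually (eventually_ge_atTop (1:ℝ))]
      with n hn hn1
    have hb0 : (0:ℝ) < (n:ℝ)+1 := by positivity
    rw [Real.norm_eq_abs, Real.norm_eq_abs, abs_of_nonneg (Real.log_nonneg hn1),
      abs_of_nonneg (Real.rpow_nonneg hb0.le _)] at hn
    have h2 : 2 * Real.log ((n:ℝ)+1) ≤ ((n:ℝ)+1)^α / c2 := by
      rw [div_mul_eq_mul_div, one_mul, le_div_iff₀ (by positivity)] at hn
      rw [le_div_iff₀ hc2]
      linarith
    calc rexp (-(((n:ℝ)+1)^α / c2)) ≤ rexp (-(2 * Real.log ((n:ℝ)+1))) := by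
          apply Real.exp_le_exp.mpr; linarith
      _ = ((n:ℝ)+1) ^ (-2 : ℝ) := by
          rw [Real.rpow_def_of_pos hb0]; ring_nf
  apply summable_of_isBigO_nat (PFD.summable_shift_rpow (by norm_num : (-2:ℝ) < -1))
  apply Asymptotics.IsBigO.of_bound 1
  filter_upwards [hev] with n hn
  rw [Real.norm_eq_abs, Real.norm_eq_abs, abs_of_nonneg (Real.exp_pos _).le,
    abs_of_nonneg (Real.rpow_nonneg (by positivity) _), one_mul]
  exact hn

lemma PFD.rpow_split {x b m1 ε0 : ℝ} (hb : 0 < b) (hm1 : 0 < m1) (hx1 : b ≤ x) (hx2 : m1 ≤ x)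
    (hε0 : 0 < ε0) :
    x ^ (-(3+2*ε0)) ≤ b^(-(2+ε0)) * m1^(-(1+ε0)) := by
  have hx0 : 0 < x := lt_of_lt_of_le hb hx1
  have : x ^ (-(3+2*ε0)) = x^(-(2+ε0)) * x^(-(1+ε0)) := by
    rw [← Real.rpow_add hx0]; ring_nf
  rw [this]
  have h1 : x^(-(2+ε0)) ≤ b^(-(2+ε0)) :=
    Real.rpow_le_rpow_of_nonpos hb hx1 (by linarith)
  have h2 : x^(-(1+ε0)) ≤ m1^(-(1+ε0)) :=
    Real.rpow_le_rpow_of_nonpos hm1 hx2 (by linarith)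
  exact mul_le_mul h1 h2 (Real.rpow_nonneg hx0.le _) (Real.rpow_nonneg hb.le _)

lemma PFD.sq_decay {c x y ε0 : ℝ} (hx : 0 < x) (hy : 0 ≤ y)
    (h : y ≤ c * x ^ (-(1.5+ε0))) :
    y^2 ≤ c^2 * x ^ (-(3+2*ε0)) := by
  have h2 : y^2 ≤ (c * x ^ (-(1.5+ε0)))^2 := by
    apply sq_le_sq' _ h
    nlinarith [Real.rpow_nonneg hx.le (-(1.5+ε0))]
  refine h2.trans_eq ?_
  rw [mul_pow, ← Real.rpow_natCast (x ^ (-(1.5+ε0))) 2, ← Real.rpow_mul hx.le]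
  norm_num
  left; congr 1; ring

lemma PFD.exp_arg_eq {b K dr ε0 : ℝ} (hb : 0 < b) (hK : 0 < K) (hdr : 0 < dr) :
    (b^(-(1+ε0/4)) / dr)^2 / (2 * (K * b^(-(2+ε0)))) = b^(ε0/2) / (2*K*dr^2) := by
  have h1 : (b^(-(1+ε0/4)))^2 = b^(-(2+ε0/2)) := by
    rw [← Real.rpow_natCast (b ^ (-(1+ε0/4))) 2, ← Real.rpow_mul hb.le]
    norm_num; ring_nf
  have h2 : b^(ε0/2) * b^(-(2+ε0)) = b^(-(2+ε0/2)) := by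
    rw [← Real.rpow_add hb]; ring_nf
  rw [div_pow, h1]
  rw [div_eq_div_iff (by positivity) (by positivity)]
  rw [← h2]
  field_simp

/-! ### Probabilistic core -/

lemma PFD.limit_tail {Ω : Type*} [MeasurableSpace Ω] (P : Measure Ω)
    (S : ℕ → Ω → ℝ) (X : Ω → ℝ)
    (hconv : ∀ᵐ ω ∂P, Tendsto (fun N => S N ω) atTop (𝓝 (X ω)))
    (s : ℝ) (B : ℝ≥0∞) (hB : ∀ N, P {ω | s ≤ |S N ω|} ≤ B) :
    P {ω | s < |X ω|} ≤ B := by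
  set C : ℕ → Set Ω := fun M => ⋂ (N) (_ : M ≤ N), {ω | s ≤ |S N ω|} with hC
  have hmono : Monotone C := by
    intro M M' h
    exact Set.iInter₂_mono' fun N hN => ⟨N, le_trans h hN, le_rfl⟩
  have hsub : {ω | s < |X ω|} ≤ᵐ[P] ⋃ M, C M := by
    filter_upwards [hconv] with ω hω hmem
    have habs : Tendsto (fun N => |S N ω|) atTop (𝓝 |X ω|) := hω.abs
    have : ∀ᶠ N in atTop, s < |S N ω| :=
      habs.eventually (eventually_gt_nhds hmem)
    obtain ⟨M, hM⟩ := this.exists_forall_of_atTop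
    exact Set.mem_iUnion.mpr ⟨M, Set.mem_iInter₂.mpr fun N hN => (hM N hN).le⟩
  calc P {ω | s < |X ω|} ≤ P (⋃ M, C M) := measure_mono_ae hsub
    _ = ⨆ M, P (C M) := hmono.directed_le.measure_iUnion
    _ ≤ B := iSup_le fun M => le_trans
        (measure_mono (Set.iInter₂_subset M le_rfl)) (hB M)

section Core
variable {d : ℕ} {Ω : Type*} [MeasurableSpace Ω] {P : Measure Ω} [IsProbabilityMeasure P]
  {ξ : ℤ → Ω → EuclideanSpace ℝ (Fin d)}

lemma PFD.exp_lin_rw (ξ : ℤ → Ω → EuclideanSpace ℝ (Fin d)) (j : ℤ) (r : Fin d → ℝ) (t : ℝ) :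
    (fun ω => rexp (t * ∑ k, r k * ξ j ω k))
      = fun ω => rexp (∑ k, (t * r k) * ξ j ω k) := by
  ext ω; rw [Finset.mul_sum]; congr 1; exact Finset.sum_congr rfl (fun k _ => by ring)

lemma PFD.integrable_exp_mul_lin (hmeas : ∀ j, Measurable (ξ j))
    (hdist : ∀ j, P.map (ξ j) = stdGaussian d) (j : ℤ) (r : Fin d → ℝ) (t : ℝ) :
    Integrable (fun ω => rexp (t * ∑ k, r k * ξ j ω k)) P := by
  rw [PFD.exp_lin_rw]
  have h0 := PFD.integrable_exp_lin_stdGaussian d (fun k => t * r k)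
  rw [← hdist j] at h0
  exact (integrable_map_measure h0.aestronglyMeasurable (hmeas j).aemeasurable).mp h0

lemma PFD.mgf_lin (hmeas : ∀ j, Measurable (ξ j))
    (hdist : ∀ j, P.map (ξ j) = stdGaussian d) (j : ℤ) (r : Fin d → ℝ) (t : ℝ) :
    mgf (fun ω => ∑ k, r k * ξ j ω k) P t = rexp (t^2 * (∑ k, (r k)^2) / 2) := by
  rw [mgf, PFD.exp_lin_rw]
  have h0 := PFD.integrable_exp_lin_stdGaussian d (fun k => t * r k)
  rw [← hdist j] at h0
  rw [← integral_map (hmeas j).aemeasurable h0.aestronglyMeasurable, hdist j,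
    PFD.integral_exp_lin_stdGaussian]
  congr 1
  rw [Finset.mul_sum]
  refine congrArg (· / 2) (Finset.sum_congr rfl fun k _ => by ring)

lemma PFD.finite_sum_tail (hmeas : ∀ j, Measurable (ξ j))
    (hindep : iIndepFun ξ P)
    (hdist : ∀ j, P.map (ξ j) = stdGaussian d)
    (r : ℤ → Fin d → ℝ) (F : Finset ℤ) {v s : ℝ} (hv : 0 < v)
    (hvsum : ∑ j ∈ F, ∑ k, (r j k)^2 ≤ v) (hs : 0 < s) :
    P {ω | s ≤ |∑ j ∈ F, ∑ k, r j k * ξ j ω k|} ≤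
      ENNReal.ofReal (2 * rexp (-s^2/(2*v))) := by
  classical
  set g : ℤ → Ω → ℝ := fun j ω => ∑ k, r j k * ξ j ω k with hg
  have hgmeas : ∀ j, Measurable (g j) := fun j => (PFD.measurable_lin d (r j)).comp (hmeas j)
  have hgindep : iIndepFun g P :=
    hindep.comp _ (fun j => PFD.measurable_lin d (r j))
  set t : ℝ := s / v with ht
  have ht0 : 0 ≤ t := le_of_lt (div_pos hs hv)
  have hint : ∀ (t' : ℝ), Integrable (fun ω => rexp (t' * (∑ j ∈ F, g j) ω)) P := by
    intro t'
    exact hgindep.integrable_exp_mul_sum hgmeas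
      (fun j _ => PFD.integrable_exp_mul_lin hmeas hdist j (r j) t')
  have hmgf : ∀ (t' : ℝ), mgf (∑ j ∈ F, g j) P t' ≤ rexp (t'^2 * v / 2) := by
    intro t'
    rw [hgindep.mgf_sum hgmeas]
    calc ∏ j ∈ F, mgf (g j) P t'
        = rexp (∑ j ∈ F, t'^2 * (∑ k, (r j k)^2) / 2) := by
          rw [Real.exp_sum]
          exact Finset.prod_congr rfl fun j _ => PFD.mgf_lin hmeas hdist j (r j) t'
      _ ≤ rexp (t'^2 * v / 2) := by
          apply Real.exp_le_exp.mpr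
          rw [← Finset.sum_div, ← Finset.mul_sum]
          gcongr
  have hup : (P {ω | s ≤ (∑ j ∈ F, g j) ω}).toReal ≤ rexp (-s^2/(2*v)) := by
    calc (P {ω | s ≤ (∑ j ∈ F, g j) ω}).toReal
        ≤ rexp (-t * s) * mgf (∑ j ∈ F, g j) P t :=
          measure_ge_le_exp_mul_mgf s ht0 (hint t)
      _ ≤ rexp (-t * s) * rexp (t^2 * v / 2) := by
          exact mul_le_mul_of_nonneg_left (hmgf t) (Real.exp_pos _).le
      _ = rexp (-s^2/(2*v)) := by
          rw [← Real.exp_add]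
          congr 1
          rw [ht]
          field_simp
          ring
  have hlo : (P {ω | (∑ j ∈ F, g j) ω ≤ -s}).toReal ≤ rexp (-s^2/(2*v)) := by
    calc (P {ω | (∑ j ∈ F, g j) ω ≤ -s}).toReal
        ≤ rexp (-(-t) * (-s)) * mgf (∑ j ∈ F, g j) P (-t) :=
          measure_le_le_exp_mul_mgf (-s) (neg_nonpos.mpr ht0) (hint (-t))
      _ ≤ rexp (-(-t) * (-s)) * rexp ((-t)^2 * v / 2) := by
          exact mul_le_mul_of_nonneg_left (hmgf (-t)) (Real.exp_pos _).le
      _ = rexp (-s^2/(2*v)) := by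
          rw [← Real.exp_add]
          congr 1
          rw [ht]
          field_simp
          ring
  have hsub : {ω | s ≤ |∑ j ∈ F, ∑ k, r j k * ξ j ω k|} ⊆
      {ω | s ≤ (∑ j ∈ F, g j) ω} ∪ {ω | (∑ j ∈ F, g j) ω ≤ -s} := by
    intro ω hω
    simp only [Set.mem_setOf_eq] at hω
    have hων : (∑ j ∈ F, g j) ω = ∑ j ∈ F, ∑ k, r j k * ξ j ω k := by
      simp [hg]
    rcases le_abs.mp hω with h | h
    · left; simp only [Set.mem_setOf_eq, hων]; exact h
    · right; simp only [Set.mem_setOf_eq, hων]; linarith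
  calc P {ω | s ≤ |∑ j ∈ F, ∑ k, r j k * ξ j ω k|}
      ≤ P ({ω | s ≤ (∑ j ∈ F, g j) ω} ∪ {ω | (∑ j ∈ F, g j) ω ≤ -s}) := measure_mono hsub
    _ ≤ P {ω | s ≤ (∑ j ∈ F, g j) ω} + P {ω | (∑ j ∈ F, g j) ω ≤ -s} := measure_union_le _ _
    _ ≤ ENNReal.ofReal (rexp (-s^2/(2*v))) + ENNReal.ofReal (rexp (-s^2/(2*v))) := by
        gcongr
        · exact (ENNReal.le_ofReal_iff_toReal_le (measure_ne_top _ _)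
            (Real.exp_pos _).le).mpr hup
        · exact (ENNReal.le_ofReal_iff_toReal_le (measure_ne_top _ _)
            (Real.exp_pos _).le).mpr hlo
    _ = ENNReal.ofReal (2 * rexp (-s^2/(2*v))) := by
        rw [← ENNReal.ofReal_add (Real.exp_pos _).le (Real.exp_pos _).le]; ring_nf

lemma PFD.ae_tail_bound (hmeas : ∀ j, Measurable (ξ j))
    (hindep : iIndepFun ξ P)
    (hdist : ∀ j, P.map (ξ j) = stdGaussian d)
    (r : ℤ → Fin d → ℝ) (u : ℕ → Finset ℤ) (X : Ω → ℝ)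
    (hconv : ∀ᵐ ω ∂P, Tendsto (fun N => ∑ j ∈ u N, ∑ k, r j k * ξ j ω k) atTop (𝓝 (X ω)))
    {v s : ℝ} (hv : 0 < v) (hvsum : ∀ N, ∑ j ∈ u N, ∑ k, (r j k)^2 ≤ v) (hs : 0 < s) :
    P {ω | s < |X ω|} ≤ ENNReal.ofReal (2 * rexp (-s^2/(2*v))) :=
  PFD.limit_tail P _ X hconv s _ fun N =>
    PFD.finite_sum_tail hmeas hindep hdist r (u N) hv (hvsum N) hs

lemma PFD.vector_tail (hd : 0 < d) (hmeas : ∀ j, Measurable (ξ j))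
    (hindep : iIndepFun ξ P)
    (hdist : ∀ j, P.map (ξ j) = stdGaussian d)
    (A : ℤ → Matrix (Fin d) (Fin d) ℝ)
    (p : ℤ → Prop) [DecidablePred p] (e : ℕ → ℤ) (he : Function.Injective e)
    (hep : ∀ m, p (e m)) (hexh : ∀ j, p j → ∃ m, e m = j)
    (Y : Ω → EuclideanSpace ℝ (Fin d))
    (hY : ∀ᵐ ω ∂P, HasSum (fun j : {j : ℤ // p j} =>
      Matrix.toEuclideanLin (A (j : ℤ)) (ξ (j : ℤ) ω)) (Y ω))
    {v t : ℝ} (hv : 0 < v) (hvsum : ∀ N, ∑ m ∈ Finset.range N, ‖A (e m)‖^2 ≤ v)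
    (ht : 0 < t) :
    P {ω | t < ‖Y ω‖} ≤ (d : ℝ≥0∞) * ENNReal.ofReal (2 * rexp (-(t/d)^2/(2*v))) := by
  classical
  set u : ℕ → Finset ℤ := fun N => (Finset.range N).map ⟨e, he⟩ with hu
  have htd : 0 < t / d := div_pos ht (by exact_mod_cast hd)
  have hsub : {ω | t < ‖Y ω‖} ⊆ ⋃ i : Fin d, {ω | t / d < |Y ω i|} := by
    intro ω hω
    by_contra hcon
    simp only [Set.mem_iUnion, Set.mem_setOf_eq, not_exists, not_lt] at hcon
    have : ‖Y ω‖ ≤ ∑ i, |Y ω i| := PFD.norm_le_sum_abs d (Y ω)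
    have h2 : ∑ i, |Y ω i| ≤ ∑ _i : Fin d, t / d :=
      Finset.sum_le_sum fun i _ => hcon i
    rw [Finset.sum_const, Finset.card_univ, Fintype.card_fin, nsmul_eq_mul] at h2
    rw [mul_div_cancel₀ t (by exact_mod_cast hd.ne' : (d:ℝ) ≠ 0)] at h2
    simp only [Set.mem_setOf_eq] at hω
    exact absurd hω (not_lt.mpr (this.trans h2))
  refine le_trans (measure_mono hsub) (le_trans (measure_iUnion_fintype_le _ _) ?_)
  have hone : ∀ i : Fin d, P {ω | t / d < |Y ω i|} ≤
      ENNReal.ofReal (2 * rexp (-(t/d)^2/(2*v))) := by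
    intro i
    apply PFD.ae_tail_bound hmeas hindep hdist (fun j k => A j i k) u
    · filter_upwards [hY] with ω hω
      have hcomp : HasSum (fun j : {j : ℤ // p j} => ∑ k, A (j:ℤ) i k * ξ (j:ℤ) ω k)
          (Y ω i) := by
        have := hω.mapL (EuclideanSpace.proj (𝕜 := ℝ) i)
        simpa [PFD.toEuclideanLin_apply_comp] using this
      have hmono : Monotone fun N => (u N).subtype p := by
        intro N N' h
        exact Finset.subtype_mono (Finset.map_subset_map.mpr (Finset.range_subset_range.mpr h))
      have hten : Tendsto (fun N => (u N).subtype p) atTop atTop := by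
        apply tendsto_atTop_finset_of_monotone hmono
        intro j
        obtain ⟨m, hm⟩ := hexh (j : ℤ) j.2
        refine ⟨m + 1, ?_⟩
        rw [Finset.mem_subtype]
        simp only [hu, Finset.mem_map, Function.Embedding.coeFn_mk, Finset.mem_range]
        exact ⟨m, Nat.lt_succ_self m, hm⟩
      have := (hcomp.comp hten : Tendsto _ atTop (𝓝 (Y ω i)))
      convert this using 2 with N
      rw [Function.comp_apply]
      refine (Finset.sum_subtype_of_mem _ fun j hj => ?_).symm
      simp only [hu, Finset.mem_map, Function.Embedding.coeFn_mk] at hj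
      obtain ⟨m, _, hm⟩ := hj
      exact hm ▸ hep m
    · exact hv
    · intro N
      have : ∑ j ∈ u N, ∑ k, (A j i k)^2 ≤ ∑ j ∈ u N, ‖A j‖^2 :=
        Finset.sum_le_sum fun j _ => PFD.row_sq_le_frobenius d (A j) i
      refine le_trans this ?_
      rw [hu, Finset.sum_map]
      exact hvsum N
    · exact htd
  calc ∑ i : Fin d, P {ω | t / d < |Y ω i|}
      ≤ ∑ _i : Fin d, ENNReal.ofReal (2 * rexp (-(t/d)^2/(2*v))) :=
        Finset.sum_le_sum fun i _ => hone i
    _ = (d : ℝ≥0∞) * ENNReal.ofReal (2 * rexp (-(t/d)^2/(2*v))) := by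
        rw [Finset.sum_const, Finset.card_univ, Fintype.card_fin, nsmul_eq_mul]

end Core
end Aux

/-- Lemma 4.1: splitting the discrete-time moving average process
`X_n = X_n^past + X_n^future`, with `X_n^past = ∑_{j ≤ 0} a_{j-n} ξ_j` and
`X_n^future = ∑_{j > 0} a_{j-n} ξ_j`, there exists `ε > 0` such that almost surely
`sup_{n ≥ 0} (n+1)^{1+ε} |X_{-n}^future| < ∞` and `sup_{n > 0} n^{1+ε} |X_n^past| < ∞`. -/
theorem discrete_past_future_decay
    (d : ℕ) {Ω : Type*} [MeasurableSpace Ω] (P : Measure Ω) [IsProbabilityMeasure P]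
    (a : ℤ → Matrix (Fin d) (Fin d) ℝ) (ξ : ℤ → Ω → EuclideanSpace ℝ (Fin d))
    (hmeas : ∀ j, Measurable (ξ j))
    (hindep : iIndepFun ξ P)
    (hdist : ∀ j, P.map (ξ j) = stdGaussian d)
    (hunit : HasSum (fun j : ℤ => a j * (a j).transpose) 1)
    (hdecay : ∃ ε > (0:ℝ), ∃ c : ℝ, ∀ j : ℤ, j ≠ 0 → ‖a j‖ ≤ c * |(j:ℝ)| ^ (-(1.5 + ε)))
    (Xpast Xfut : ℤ → Ω → EuclideanSpace ℝ (Fin d))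
    (hpast : ∀ n : ℤ, ∀ᵐ ω ∂P, HasSum
      (fun j : {j : ℤ // j ≤ 0} => Matrix.toEuclideanLin (a ((j : ℤ) - n)) (ξ (j : ℤ) ω))
      (Xpast n ω))
    (hfut : ∀ n : ℤ, ∀ᵐ ω ∂P, HasSum
      (fun j : {j : ℤ // 0 < j} => Matrix.toEuclideanLin (a ((j : ℤ) - n)) (ξ (j : ℤ) ω))
      (Xfut n ω)) :
    ∃ ε > (0:ℝ), ∀ᵐ ω ∂P,
      (∃ M : ℝ, ∀ n : ℕ, ((n : ℝ) + 1) ^ (1 + ε) * ‖Xfut (-(n : ℤ)) ω‖ ≤ M) ∧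
      (∃ M : ℝ, ∀ n : ℕ, 0 < n → (n : ℝ) ^ (1 + ε) * ‖Xpast (n : ℤ) ω‖ ≤ M) := by
  classical
  obtain ⟨ε0, hε0, c, hc⟩ := hdecay
  rcases Nat.eq_zero_or_pos d with hd0 | hd
  · subst hd0
    refine ⟨1, one_pos, ae_of_all _ fun ω => ?_⟩
    have hz : ∀ v : EuclideanSpace ℝ (Fin 0), ‖v‖ = 0 := fun v =>
      le_antisymm (by simpa using PFD.norm_le_sum_abs 0 v) (norm_nonneg v)
    exact ⟨⟨0, fun n => by rw [hz, mul_zero]⟩, ⟨0, fun n _ => by rw [hz, mul_zero]⟩⟩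
  have hc0 : 0 ≤ c := by
    have h1 := hc 1 one_ne_zero
    have h2 : ‖a 1‖ ≤ c := by simpa using h1
    exact le_trans (norm_nonneg _) h2
  set ε : ℝ := ε0 / 4 with hεdef
  have hεpos : 0 < ε := by positivity
  refine ⟨ε, hεpos, ?_⟩
  have hCssum : Summable (fun m : ℕ => ((m:ℝ)+1) ^ (-(1+ε0))) :=
    PFD.summable_shift_rpow (by linarith)
  set Cs : ℝ := ∑' m : ℕ, ((m:ℝ)+1) ^ (-(1+ε0)) with hCsdef
  have hCs0 : 0 ≤ Cs := tsum_nonneg fun m => Real.rpow_nonneg (by positivity) _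
  set K : ℝ := c^2 * Cs + 1 with hKdef
  have hKpos : 0 < K := by positivity
  have hdr : (0:ℝ) < d := by exact_mod_cast hd
  -- generic variance bound
  have hvar : ∀ (σ : ℕ → ℤ) (b : ℝ), 0 < b →
      (∀ m : ℕ, (m:ℝ)+1 ≤ |((σ m : ℤ):ℝ)| ∧ b ≤ |((σ m):ℝ)|) →
      ∀ N : ℕ, ∑ m ∈ Finset.range N, ‖a (σ m)‖^2 ≤ K * b^(-(2+ε0)) := by
    intro σ b hb0 hσ N
    have hterm : ∀ m : ℕ, ‖a (σ m)‖^2 ≤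
        c^2 * (b^(-(2+ε0)) * ((m:ℝ)+1)^(-(1+ε0))) := by
      intro m
      obtain ⟨h1, h2⟩ := hσ m
      have hm1 : (0:ℝ) < (m:ℝ)+1 := by positivity
      have hx0 : (0:ℝ) < |((σ m):ℝ)| := lt_of_lt_of_le hm1 h1
      have hσ0 : σ m ≠ 0 := by
        intro h
        rw [h] at hx0
        simp at hx0
      have hsq := PFD.sq_decay hx0 (norm_nonneg _) (hc (σ m) hσ0)
      refine hsq.trans ?_
      exact mul_le_mul_of_nonneg_left (PFD.rpow_split hb0 hm1 h2 h1 hε0) (by positivity)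
    calc ∑ m ∈ Finset.range N, ‖a (σ m)‖^2
        ≤ ∑ m ∈ Finset.range N, c^2 * (b^(-(2+ε0)) * ((m:ℝ)+1)^(-(1+ε0))) :=
          Finset.sum_le_sum fun m _ => hterm m
      _ = c^2 * b^(-(2+ε0)) * ∑ m ∈ Finset.range N, ((m:ℝ)+1)^(-(1+ε0)) := by
          rw [Finset.mul_sum]; exact Finset.sum_congr rfl fun m _ => by ring
      _ ≤ c^2 * b^(-(2+ε0)) * Cs := by
          refine mul_le_mul_of_nonneg_left ?_ (by positivity)
          exact hCssum.sum_le_tsum _ (fun m _ => Real.rpow_nonneg (by positivity) _)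
      _ ≤ K * b^(-(2+ε0)) := by
          have hcK : c^2 * Cs ≤ K := by rw [hKdef]; linarith
          calc c^2 * b^(-(2+ε0)) * Cs = (c^2 * Cs) * b^(-(2+ε0)) := by ring
            _ ≤ K * b^(-(2+ε0)) :=
              mul_le_mul_of_nonneg_right hcK (Real.rpow_nonneg hb0.le _)
  -- the summable upper bound
  set D : ℕ → ℝ≥0∞ := fun n => (d:ℝ≥0∞) *
    ENNReal.ofReal (2 * Real.exp (-(((n:ℝ)+1)^(ε0/2) / (2*K*(d:ℝ)^2)))) with hDdef
  have hDsum : (∑' n, D n) ≠ ⊤ := by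
    rw [hDdef]
    simp_rw [ENNReal.tsum_mul_left]
    have hsum2 : Summable (fun n : ℕ => 2 * Real.exp (-(((n:ℝ)+1)^(ε0/2) / (2*K*(d:ℝ)^2)))) :=
      (PFD.summable_exp_neg_rpow (by positivity) (by positivity)).mul_left 2
    rw [← ENNReal.ofReal_tsum_of_nonneg (fun n => by positivity) hsum2]
    exact ENNReal.mul_ne_top (by simp) ENNReal.ofReal_ne_top
  -- generic reduction of the tail bound to `D n`
  have hDeq : ∀ n : ℕ, (d:ℝ≥0∞) * ENNReal.ofReal (2 * Real.exp
      (-(((n:ℝ)+1)^(-(1+ε))/(d:ℝ))^2 / (2 * (K * ((n:ℝ)+1)^(-(2+ε0)))))) = D n := by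
    intro n
    have hb0 : (0:ℝ) < (n:ℝ)+1 := by positivity
    have harg : -(((n:ℝ)+1)^(-(1+ε))/(d:ℝ))^2 / (2 * (K * ((n:ℝ)+1)^(-(2+ε0))))
        = -(((n:ℝ)+1)^(ε0/2) / (2*K*(d:ℝ)^2)) := by
      rw [neg_div]
      rw [hεdef]
      exact congrArg Neg.neg (PFD.exp_arg_eq hb0 hKpos hdr)
    rw [harg]
  -- future tail bounds
  have hfutn : ∀ n : ℕ,
      P {ω | ((n:ℝ)+1)^(-(1+ε)) < ‖Xfut (-(n:ℤ)) ω‖} ≤ D n := by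
    intro n
    have hb0 : (0:ℝ) < (n:ℝ)+1 := by positivity
    have hv : 0 < K * ((n:ℝ)+1)^(-(2+ε0)) := by positivity
    have ht : 0 < ((n:ℝ)+1)^(-(1+ε)) := Real.rpow_pos_of_pos hb0 _
    have hσ : ∀ m : ℕ, (m:ℝ)+1 ≤ |(((((m:ℤ)+1) - (-(n:ℤ))) : ℤ):ℝ)| ∧
        ((n:ℝ)+1) ≤ |((((m:ℤ)+1) - (-(n:ℤ)) : ℤ):ℝ)| := by
      intro m
      have hcast : ((((m:ℤ)+1) - (-(n:ℤ)) : ℤ):ℝ) = (m:ℝ)+1+(n:ℝ) := by push_cast; ring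
      rw [hcast, abs_of_nonneg (by positivity)]
      constructor
      · have : (0:ℝ) ≤ (n:ℝ) := Nat.cast_nonneg n
        linarith
      · have : (0:ℝ) ≤ (m:ℝ) := Nat.cast_nonneg m
        linarith
    have key := PFD.vector_tail hd hmeas hindep hdist
      (fun j => a (j - (-(n:ℤ)))) (fun j => 0 < j)
      (fun m => (m:ℤ)+1)
      (fun x y h => by have h' : (x:ℤ)+1 = (y:ℤ)+1 := h; omega)
      (fun m => by show (0:ℤ) < (m:ℤ)+1; omega)
      (fun j hj => ⟨(j-1).toNat, by
        have hj' : (0:ℤ) < j := hj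
        show ((j-1).toNat:ℤ)+1 = j
        omega⟩)
      (Xfut (-(n:ℤ))) (hfut (-(n:ℤ))) hv
      (hvar (fun m => ((m:ℤ)+1) - (-(n:ℤ))) ((n:ℝ)+1) hb0 hσ) ht
    exact key.trans_eq (hDeq n)
  -- past tail bounds
  have hpastn : ∀ n : ℕ,
      P {ω | ((n:ℝ)+1)^(-(1+ε)) < ‖Xpast ((n:ℤ)+1) ω‖} ≤ D n := by
    intro n
    have hb0 : (0:ℝ) < (n:ℝ)+1 := by positivity
    have hv : 0 < K * ((n:ℝ)+1)^(-(2+ε0)) := by positivity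
    have ht : 0 < ((n:ℝ)+1)^(-(1+ε)) := Real.rpow_pos_of_pos hb0 _
    have hσ : ∀ m : ℕ, (m:ℝ)+1 ≤ |(((-(m:ℤ)) - ((n:ℤ)+1) : ℤ):ℝ)| ∧
        ((n:ℝ)+1) ≤ |(((-(m:ℤ)) - ((n:ℤ)+1) : ℤ):ℝ)| := by
      intro m
      have hcast : (((-(m:ℤ)) - ((n:ℤ)+1) : ℤ):ℝ) = -((m:ℝ)+(n:ℝ)+1) := by push_cast; ring
      rw [hcast, abs_neg, abs_of_nonneg (by positivity)]
      constructor
      · have : (0:ℝ) ≤ (n:ℝ) := Nat.cast_nonneg n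
        linarith
      · have : (0:ℝ) ≤ (m:ℝ) := Nat.cast_nonneg m
        linarith
    have key := PFD.vector_tail hd hmeas hindep hdist
      (fun j => a (j - ((n:ℤ)+1))) (fun j => j ≤ 0)
      (fun m => -(m:ℤ))
      (fun x y h => by have h' : -(x:ℤ) = -(y:ℤ) := h; omega)
      (fun m => by show -(m:ℤ) ≤ 0; omega)
      (fun j hj => ⟨(-j).toNat, by
        have hj' : j ≤ (0:ℤ) := hj
        show -((-j).toNat:ℤ) = j
        omega⟩)
      (Xpast ((n:ℤ)+1)) (hpast ((n:ℤ)+1)) hv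
      (hvar (fun m => (-(m:ℤ)) - ((n:ℤ)+1)) ((n:ℝ)+1) hb0 hσ) ht
    exact key.trans_eq (hDeq n)
  -- Borel–Cantelli
  have hfutBC : ∀ᵐ ω ∂P, ∀ᶠ n : ℕ in atTop,
      ω ∉ {ω' | ((n:ℝ)+1)^(-(1+ε)) < ‖Xfut (-(n:ℤ)) ω'‖} :=
    ae_eventually_notMem (ne_top_of_le_ne_top hDsum (ENNReal.tsum_le_tsum hfutn))
  have hpastBC : ∀ᵐ ω ∂P, ∀ᶠ n : ℕ in atTop,
      ω ∉ {ω' | ((n:ℝ)+1)^(-(1+ε)) < ‖Xpast ((n:ℤ)+1) ω'‖} :=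
    ae_eventually_notMem (ne_top_of_le_ne_top hDsum (ENNReal.tsum_le_tsum hpastn))
  filter_upwards [hfutBC, hpastBC] with ω hfω hpω
  constructor
  · obtain ⟨N₀, hN₀⟩ := eventually_atTop.mp hfω
    refine ⟨1 + ∑ m ∈ Finset.range N₀, ((m:ℝ)+1)^(1+ε) * ‖Xfut (-(m:ℤ)) ω‖, fun n => ?_⟩
    have hsum0 : (0:ℝ) ≤ ∑ m ∈ Finset.range N₀, ((m:ℝ)+1)^(1+ε) * ‖Xfut (-(m:ℤ)) ω‖ :=
      Finset.sum_nonneg fun m _ =>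
        mul_nonneg (Real.rpow_nonneg (by positivity) _) (norm_nonneg _)
    rcases lt_or_ge n N₀ with hn | hn
    · have hle : ((n:ℝ)+1)^(1+ε) * ‖Xfut (-(n:ℤ)) ω‖ ≤
          ∑ m ∈ Finset.range N₀, ((m:ℝ)+1)^(1+ε) * ‖Xfut (-(m:ℤ)) ω‖ :=
        Finset.single_le_sum
          (f := fun m : ℕ => ((m:ℝ)+1)^(1+ε) * ‖Xfut (-(m:ℤ)) ω‖)
          (fun m _ => mul_nonneg (Real.rpow_nonneg (by positivity) _) (norm_nonneg _))
          (Finset.mem_range.mpr hn)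
      linarith
    · have h1 := hN₀ n hn
      simp only [Set.mem_setOf_eq, not_lt] at h1
      have hb0 : (0:ℝ) < (n:ℝ)+1 := by positivity
      have h2 : ((n:ℝ)+1)^(1+ε) * ‖Xfut (-(n:ℤ)) ω‖ ≤
          ((n:ℝ)+1)^(1+ε) * ((n:ℝ)+1)^(-(1+ε)) :=
        mul_le_mul_of_nonneg_left h1 (Real.rpow_nonneg hb0.le _)
      rw [← Real.rpow_add hb0, add_neg_cancel, Real.rpow_zero] at h2
      linarith
  · obtain ⟨N₁, hN₁⟩ := eventually_atTop.mp hpω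
    refine ⟨1 + ∑ m ∈ Finset.range N₁, ((m:ℝ)+1)^(1+ε) * ‖Xpast ((m:ℤ)+1) ω‖, fun n hn => ?_⟩
    obtain ⟨m, rfl⟩ : ∃ m : ℕ, n = m + 1 := ⟨n - 1, (Nat.succ_pred_eq_of_pos hn).symm⟩
    have hcast1 : ((m + 1 : ℕ) : ℝ) = (m:ℝ)+1 := by push_cast; ring
    have hcast2 : ((m + 1 : ℕ) : ℤ) = (m:ℤ)+1 := by push_cast; ring
    rw [hcast1, hcast2]
    have hsum0 : (0:ℝ) ≤ ∑ m ∈ Finset.range N₁, ((m:ℝ)+1)^(1+ε) * ‖Xpast ((m:ℤ)+1) ω‖ :=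
      Finset.sum_nonneg fun m _ =>
        mul_nonneg (Real.rpow_nonneg (by positivity) _) (norm_nonneg _)
    rcases lt_or_ge m N₁ with hm | hm
    · have hle : ((m:ℝ)+1)^(1+ε) * ‖Xpast ((m:ℤ)+1) ω‖ ≤
          ∑ m ∈ Finset.range N₁, ((m:ℝ)+1)^(1+ε) * ‖Xpast ((m:ℤ)+1) ω‖ :=
        Finset.single_le_sum
          (f := fun m : ℕ => ((m:ℝ)+1)^(1+ε) * ‖Xpast ((m:ℤ)+1) ω‖)
          (fun m _ => mul_nonneg (Real.rpow_nonneg (by positivity) _) (norm_nonneg _))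
          (Finset.mem_range.mpr hm)
      linarith
    · have h1 := hN₁ m hm
      simp only [Set.mem_setOf_eq, not_lt] at h1
      have hb0 : (0:ℝ) < (m:ℝ)+1 := by positivity
      have h2 : ((m:ℝ)+1)^(1+ε) * ‖Xpast ((m:ℤ)+1) ω‖ ≤
          ((m:ℝ)+1)^(1+ε) * ((m:ℝ)+1)^(-(1+ε)) :=
        mul_le_mul_of_nonneg_left h1 (Real.rpow_nonneg hb0.le _)
      rw [← Real.rpow_add hb0, add_neg_cancel, Real.rpow_zero] at h2
      linarith
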